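/- Suppose q : ℝ≥0 → ℝ is differentiable and satisfies q'_t = λ - θ·(q_t - 1)⁺ - μ·(q_t ⊓ 1) with q_0 ≥ 0, where λ > μ > 0 and θ > 0 are constants. Then q_t converges to (λ - μ)/θ + 1 as t → ∞. -/

import Mathlib

open Filter

/-- In the ED regime (`λ > μ`), the fluid limit converges to `(λ-μ)/θ + 1`. -/
theorem stmt_2 (lam μ θ : ℝ) (hμ : 0 < μ) (hlam : μ < lam) (hθ : 0 < θ)
    (q : ℝ → ℝ) (hq0 : 0 ≤ q 0)
    (hq : ∀ t : ℝ, 0 ≤ t →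
      HasDerivAt q (lam - θ * max (q t - 1) 0 - μ * min (q t) 1) t) :
    Tendsto q atTop (nhds ((lam - μ) / θ + 1)) := by
  set qs : ℝ := (lam - μ) / θ + 1 with hqs
  set c : ℝ := min μ θ with hc
  have hc0 : 0 < c := lt_min hμ hθ
  have hq1 : θ * (qs - 1) = lam - μ := by
    rw [hqs]; field_simp; ring
  have hkey : ∀ x : ℝ,
      (lam - θ * max (x - 1) 0 - μ * min x 1) * (x - qs) ≤ -(c * (x - qs) ^ 2) := by
    intro x
    have hcμ : c ≤ μ := min_le_left _ _
    have hcθ : c ≤ θ := min_le_right _ _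
    have hqs1 : 1 < qs := by
      rw [hqs]
      nlinarith [div_pos (by linarith : (0:ℝ) < lam - μ) hθ]
    rcases le_total x 1 with hx | hx
    · rw [max_eq_right (by linarith), min_eq_left hx]
      have hP : 0 ≤ (qs - x) * ((θ - c) * (qs - 1) + (μ - c) * (1 - x)) := by
        apply mul_nonneg (by linarith)
        have := mul_nonneg (by linarith : (0:ℝ) ≤ θ - c) (by linarith : (0:ℝ) ≤ qs - 1)
        have := mul_nonneg (by linarith : (0:ℝ) ≤ μ - c) (by linarith : (0:ℝ) ≤ 1 - x)
        linarith
      nlinarith [hP, hq1, sq_nonneg (x - qs)]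
    · rw [max_eq_left (by linarith), min_eq_right hx]
      nlinarith [sq_nonneg (x - qs)]
  -- Lyapunov function
  set h : ℝ → ℝ := fun t => (q t - qs) ^ 2 * Real.exp (2 * c * t) with hh
  have hexp : ∀ t : ℝ, HasDerivAt (fun t => Real.exp (2 * c * t))
      (Real.exp (2 * c * t) * (2 * c)) t := by
    intro t
    exact (Real.hasDerivAt_exp _).comp t (by simpa using (hasDerivAt_id t).const_mul (2 * c))
  have hderiv : ∀ t : ℝ, 0 ≤ t → HasDerivAt h
      ((2 * (q t - qs) * (lam - θ * max (q t - 1) 0 - μ * min (q t) 1)) * Real.exp (2 * c * t)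
        + (q t - qs) ^ 2 * (Real.exp (2 * c * t) * (2 * c))) t := by
    intro t ht
    have h1 : HasDerivAt (fun t => (q t - qs) ^ 2)
        (2 * (q t - qs) * (lam - θ * max (q t - 1) 0 - μ * min (q t) 1)) t := by
      have := ((hq t ht).sub_const qs).pow 2
      exact this.congr_deriv (by simp)
    exact h1.mul (hexp t)
  have hderiv_nonpos : ∀ t : ℝ, 0 ≤ t → deriv h t ≤ 0 := by
    intro t ht
    rw [(hderiv t ht).deriv]
    have hk := hkey (q t)
    have he : 0 < Real.exp (2 * c * t) := Real.exp_pos _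
    nlinarith [mul_le_mul_of_nonneg_right hk he.le, sq_nonneg (q t - qs),
      mul_nonneg (sq_nonneg (q t - qs)) he.le]
  have hanti : AntitoneOn h (Set.Ici (0:ℝ)) := by
    apply antitoneOn_of_deriv_nonpos (convex_Ici 0)
    · intro t ht
      exact (hderiv t ht).continuousAt.continuousWithinAt
    · intro t ht
      rw [interior_Ici] at ht
      exact (hderiv t (le_of_lt ht)).differentiableAt.differentiableWithinAt
    · intro t ht
      rw [interior_Ici] at ht
      exact hderiv_nonpos t ht.le
  have hbound : ∀ t : ℝ, 0 ≤ t → (q t - qs) ^ 2 ≤ (q 0 - qs) ^ 2 * Real.exp (-(2 * c * t)) := by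
    intro t ht
    have := hanti (Set.self_mem_Ici) (Set.mem_Ici.2 ht) ht
    rw [hh] at this
    simp only at this
    rw [Real.exp_neg]
    have he : 0 < Real.exp (2 * c * t) := Real.exp_pos _
    have h0 : (q 0 - qs) ^ 2 * Real.exp (2 * c * 0) = (q 0 - qs) ^ 2 := by simp
    calc (q t - qs) ^ 2
        = (q t - qs) ^ 2 * Real.exp (2 * c * t) * (Real.exp (2 * c * t))⁻¹ := by field_simp
      _ ≤ (q 0 - qs) ^ 2 * (Real.exp (2 * c * t))⁻¹ :=
        mul_le_mul_of_nonneg_right (h0 ▸ this) (by positivity)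
  have hsq : Tendsto (fun t => (q t - qs) ^ 2) atTop (nhds 0) := by
    have hB : Tendsto (fun t : ℝ => (q 0 - qs) ^ 2 * Real.exp (-(2 * c * t))) atTop (nhds 0) := by
      have h1 : Tendsto (fun t : ℝ => 2 * c * t) atTop atTop :=
        Tendsto.const_mul_atTop (by linarith) tendsto_id
      have h2 : Tendsto (fun t : ℝ => Real.exp (-(2 * c * t))) atTop (nhds 0) := by
        have := Real.tendsto_exp_atBot.comp (tendsto_neg_atBot_iff.2 h1)
        exact this
      simpa using h2.const_mul ((q 0 - qs) ^ 2)
    refine squeeze_zero' ?_ ?_ hB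
    · exact Eventually.of_forall fun t => sq_nonneg _
    · exact eventually_atTop.2 ⟨0, fun t ht => hbound t ht⟩
  have habs : Tendsto (fun t => |q t - qs|) atTop (nhds 0) := by
    have := (Real.continuous_sqrt.tendsto 0).comp hsq
    simpa [Function.comp_def, Real.sqrt_sq_eq_abs] using this
  have hsub : Tendsto (fun t => q t - qs) atTop (nhds 0) := by
    exact (tendsto_zero_iff_abs_tendsto_zero _).mpr habs
  have := hsub.add_const qs
  simpa using this
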